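/- arXiv:2307.13206 — 2 statements merged into one kernel-verified Lean document; each statement's English description precedes it below -/
import Mathlib

section
/- For every x > 0, \int_x^\infty e^{-t^2/2} dt ≤ \pi e^{-x^2/2} / (\sqrt{(\pi-2)^2 x^2 + 2\pi} + 2x). -/
open MeasureTheory Real Set Filter

noncomputable def mrf (t : ℝ) : ℝ := Real.exp (-t ^ 2 / 2)
noncomputable def mrs (x : ℝ) : ℝ := Real.sqrt ((π - 2) ^ 2 * x ^ 2 + 2 * π)
noncomputable def mrg (x : ℝ) : ℝ := π / (mrs x + 2 * x)
noncomputable def mrI (x : ℝ) : ℝ := ∫ t in Set.Ioi x, mrf t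
noncomputable def mrF (x : ℝ) : ℝ := Real.exp (-x ^ 2 / 2) * mrg x - mrI x
noncomputable def mrK : ℝ := π * (4 + 2 * π - π ^ 2)
noncomputable def mrL : ℝ := 2 * π ^ 2 * (π - 2) ^ 2 * (4 - π) * (π - 3)
noncomputable def mrX : ℝ := mrK / Real.sqrt mrL

lemma hK_pos : 0 < mrK := by
  have h1 := Real.pi_gt_d6
  have h2 := Real.pi_lt_d2
  unfold mrK; nlinarith

lemma hL_pos : 0 < mrL := by
  have h1 := Real.pi_gt_d6
  have h2 := Real.pi_lt_d2
  unfold mrL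
  have h3 := Real.pi_gt_three
  have h4 := Real.pi_lt_four
  apply mul_pos (mul_pos (mul_pos _ _) _) <;> nlinarith

lemma hX_pos : 0 < mrX := div_pos hK_pos (Real.sqrt_pos.mpr hL_pos)

lemma hX_sq : mrL * mrX ^ 2 = mrK ^ 2 := by
  unfold mrX
  rw [div_pow, Real.sq_sqrt hL_pos.le]
  rw [mul_comm]; exact div_mul_cancel₀ _ hL_pos.ne'

lemma hs_pos (x : ℝ) : 0 < mrs x := by
  apply Real.sqrt_pos.mpr
  nlinarith [Real.pi_pos, sq_nonneg ((π - 2) * x)]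

lemma hs_sq (x : ℝ) : mrs x ^ 2 = (π - 2) ^ 2 * x ^ 2 + 2 * π := by
  apply Real.sq_sqrt
  nlinarith [Real.pi_pos, sq_nonneg ((π - 2) * x)]

lemma hs_big (x : ℝ) : 2 < mrs x := by
  have h1 := Real.pi_gt_d6
  have := hs_sq x
  nlinarith [hs_pos x, sq_nonneg ((π - 2) * x)]

lemma hd_pos {x : ℝ} (hx : -1 < x) : 0 < mrs x + 2 * x := by
  have := hs_big x; linarith

lemma hf_cont : Continuous mrf := by unfold mrf; fun_prop

lemma hf_int : Integrable mrf := by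
  have h := integrable_exp_neg_mul_sq (by norm_num : (0:ℝ) < 1/2)
  apply h.congr
  · filter_upwards with t
    unfold mrf; ring_nf

lemma hI_repr {u : ℝ} (hu : -1 ≤ u) :
    mrI u = mrI (-1) - ∫ t in (-1:ℝ)..u, mrf t := by
  have hsplit : Set.Ioc (-1:ℝ) u ∪ Set.Ioi u = Set.Ioi (-1:ℝ) :=
    Set.Ioc_union_Ioi_eq_Ioi hu
  have h : ∫ t in Set.Ioc (-1:ℝ) u ∪ Set.Ioi u, mrf t
      = (∫ t in Set.Ioc (-1:ℝ) u, mrf t) + ∫ t in Set.Ioi u, mrf t :=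
    MeasureTheory.setIntegral_union Set.Ioc_disjoint_Ioi_same
      measurableSet_Ioi hf_int.integrableOn hf_int.integrableOn
  rw [hsplit] at h
  rw [intervalIntegral.integral_of_le hu]
  unfold mrI
  rw [h]; ring

lemma hI_deriv {x : ℝ} (hx : -1 < x) : HasDerivAt mrI (-mrf x) x := by
  have h1 : HasDerivAt (fun u => ∫ t in (-1:ℝ)..u, mrf t) (mrf x) x :=
    intervalIntegral.integral_hasDerivAt_right hf_int.intervalIntegrable
      hf_cont.aestronglyMeasurable.stronglyMeasurableAtFilter
      hf_cont.continuousAt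
  have h2 : HasDerivAt (fun u => mrI (-1) - ∫ t in (-1:ℝ)..u, mrf t) (-mrf x) x :=
    h1.const_sub _
  apply h2.congr_of_eventuallyEq
  filter_upwards [Ioi_mem_nhds hx] with u hu
  exact hI_repr (le_of_lt hu)

lemma hs_deriv (x : ℝ) : HasDerivAt mrs ((π - 2) ^ 2 * x / mrs x) x := by
  have hin : HasDerivAt (fun y : ℝ => (π - 2) ^ 2 * y ^ 2 + 2 * π)
      (2 * ((π - 2) ^ 2 * x)) x := by
    have := ((hasDerivAt_pow 2 x).const_mul ((π - 2) ^ 2)).add_const (2 * π)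
    exact this.congr_deriv (by ring)
  have hne : (π - 2) ^ 2 * x ^ 2 + 2 * π ≠ 0 := by
    nlinarith [Real.pi_pos, sq_nonneg ((π - 2) * x)]
  have h := (Real.hasDerivAt_sqrt hne).comp x hin
  refine h.congr_deriv ?_
  unfold mrs
  have := hs_pos x
  unfold mrs at this
  field_simp

noncomputable def mrP (x : ℝ) : ℝ :=
  -π * ((π - 2) ^ 2 * x / mrs x + 2) / (mrs x + 2 * x) ^ 2 - x * mrg x + 1

lemma hg_deriv {x : ℝ} (hx : -1 < x) :
    HasDerivAt mrg (-π * ((π - 2) ^ 2 * x / mrs x + 2) / (mrs x + 2 * x) ^ 2) x := by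
  have hd : HasDerivAt (fun y => mrs y + 2 * y) ((π - 2) ^ 2 * x / mrs x + 2) x := by
    have := (hs_deriv x).add ((hasDerivAt_id x).const_mul 2)
    exact this.congr_deriv (by ring)
  have h := (hasDerivAt_const x π).div hd (ne_of_gt (hd_pos hx))
  refine h.congr_deriv ?_
  field_simp
  ring

lemma hE_deriv (x : ℝ) :
    HasDerivAt (fun y : ℝ => Real.exp (-y ^ 2 / 2)) (-x * Real.exp (-x ^ 2 / 2)) x := by
  have hin : HasDerivAt (fun y : ℝ => -y ^ 2 / 2) (-x) x := by
    have := ((hasDerivAt_pow 2 x).neg).div_const 2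
    exact this.congr_deriv (by ring)
  have := (Real.hasDerivAt_exp (-x ^ 2 / 2)).comp x hin
  exact this.congr_deriv (by ring)

lemma hF_deriv {x : ℝ} (hx : -1 < x) :
    HasDerivAt mrF (Real.exp (-x ^ 2 / 2) * mrP x) x := by
  have h1 := ((hE_deriv x).mul (hg_deriv hx)).sub (hI_deriv hx)
  have : mrF = fun y => Real.exp (-y ^ 2 / 2) * mrg y - mrI y := rfl
  rw [this]
  refine h1.congr_deriv ?_
  unfold mrP mrg mrf
  ring

lemma hP_eq {x : ℝ} (hx : 0 < x) :
    mrP x * (mrs x * (mrs x + 2 * x) ^ 2) =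
      x * (((4 - π) * (π - 2) ^ 2 * x ^ 2 + mrK) - (π - 2) * (4 - π) * x * mrs x) := by
  have hs2 := hs_sq x
  have hs0 := (hs_pos x).ne'
  have hd0 := (hd_pos (by linarith : (-1:ℝ) < x)).ne'
  have t1 : -π * ((π - 2) ^ 2 * x / mrs x + 2) / (mrs x + 2 * x) ^ 2 *
      (mrs x * (mrs x + 2 * x) ^ 2) = -π * ((π - 2) ^ 2 * x + 2 * mrs x) := by
    field_simp <;> ring
  have t2 : x * mrg x * (mrs x * (mrs x + 2 * x) ^ 2)
      = π * x * mrs x * (mrs x + 2 * x) := by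
    unfold mrg; field_simp <;> ring
  calc mrP x * (mrs x * (mrs x + 2 * x) ^ 2)
      = -π * ((π - 2) ^ 2 * x / mrs x + 2) / (mrs x + 2 * x) ^ 2 *
          (mrs x * (mrs x + 2 * x) ^ 2)
        - x * mrg x * (mrs x * (mrs x + 2 * x) ^ 2)
        + mrs x * (mrs x + 2 * x) ^ 2 := by unfold mrP; ring
    _ = -π * ((π - 2) ^ 2 * x + 2 * mrs x) - π * x * mrs x * (mrs x + 2 * x)
        + mrs x * (mrs x + 2 * x) ^ 2 := by rw [t1, t2]
    _ = x * (((4 - π) * (π - 2) ^ 2 * x ^ 2 + mrK) - (π - 2) * (4 - π) * x * mrs x) := by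
        unfold mrK
        linear_combination (mrs x + (4 - π) * x) * hs2


lemma hQ_pos (x : ℝ) : 0 < (4 - π) * (π - 2) ^ 2 * x ^ 2 + mrK := by
  have h3 := Real.pi_gt_three
  have h4 := Real.pi_lt_four
  have := hK_pos
  nlinarith [mul_nonneg (by linarith : (0:ℝ) ≤ 4 - π) (sq_nonneg ((π - 2) * x)), hK_pos]

lemma hSQ (x : ℝ) (hx : 0 < x) :
    ((π - 2) * (4 - π) * x * mrs x) ^ 2
      = ((4 - π) * (π - 2) ^ 2 * x ^ 2 + mrK) ^ 2 + (mrL * x ^ 2 - mrK ^ 2) := by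
  have hs2 := hs_sq x
  unfold mrK mrL
  linear_combination ((π - 2) * (4 - π) * x) ^ 2 * hs2

lemma hcxs_nonneg (x : ℝ) (hx : 0 < x) : 0 ≤ (π - 2) * (4 - π) * x * mrs x := by
  have h3 := Real.pi_gt_three
  have h4 := Real.pi_lt_four
  exact le_of_lt (mul_pos (mul_pos (mul_pos (by linarith) (by linarith)) hx) (hs_pos x))

lemma hP_nonneg {x : ℝ} (hx : 0 < x) (hx0 : x ≤ mrX) : 0 ≤ mrP x := by
  have hQ := hQ_pos x
  have hsq := hSQ x hx
  have hLx : mrL * x ^ 2 ≤ mrK ^ 2 := by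
    rw [← hX_sq]
    have : x ^ 2 ≤ mrX ^ 2 := by nlinarith [hX_pos]
    nlinarith [hL_pos]
  have hle : (π - 2) * (4 - π) * x * mrs x ≤ (4 - π) * (π - 2) ^ 2 * x ^ 2 + mrK := by
    nlinarith [hcxs_nonneg x hx, hQ]
  have hN : 0 ≤ mrP x * (mrs x * (mrs x + 2 * x) ^ 2) := by
    rw [hP_eq hx]
    have : 0 ≤ ((4 - π) * (π - 2) ^ 2 * x ^ 2 + mrK) - (π - 2) * (4 - π) * x * mrs x := by
      linarith
    positivity
  have hpos : 0 < mrs x * (mrs x + 2 * x) ^ 2 := by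
    have := hs_pos x
    have := hd_pos (by linarith : (-1:ℝ) < x)
    positivity
  nlinarith [hN, hpos]

lemma hP_nonpos {x : ℝ} (hx0 : mrX ≤ x) : mrP x ≤ 0 := by
  have hx : 0 < x := lt_of_lt_of_le hX_pos hx0
  have hQ := hQ_pos x
  have hsq := hSQ x hx
  have hLx : mrK ^ 2 ≤ mrL * x ^ 2 := by
    rw [← hX_sq]
    have : mrX ^ 2 ≤ x ^ 2 := by nlinarith [hX_pos]
    nlinarith [hL_pos]
  have hle : (4 - π) * (π - 2) ^ 2 * x ^ 2 + mrK ≤ (π - 2) * (4 - π) * x * mrs x := by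
    nlinarith [hcxs_nonneg x hx, hQ]
  have hN : mrP x * (mrs x * (mrs x + 2 * x) ^ 2) ≤ 0 := by
    rw [hP_eq hx]
    have h1 : ((4 - π) * (π - 2) ^ 2 * x ^ 2 + mrK) - (π - 2) * (4 - π) * x * mrs x ≤ 0 := by
      linarith
    nlinarith
  have hpos : 0 < mrs x * (mrs x + 2 * x) ^ 2 := by
    have := hs_pos x
    have := hd_pos (by linarith : (-1:ℝ) < x)
    positivity
  nlinarith [hN, hpos]

lemma hF_mono : MonotoneOn mrF (Set.Icc 0 mrX) := by
  apply monotoneOn_of_deriv_nonneg (convex_Icc _ _)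
  · intro x hx
    exact (hF_deriv (by linarith [hx.1] : (-1:ℝ) < x)).continuousAt.continuousWithinAt
  · intro x hx
    rw [interior_Icc] at hx
    exact (hF_deriv (by linarith [hx.1] : (-1:ℝ) < x)).differentiableAt.differentiableWithinAt
  · intro x hx
    rw [interior_Icc] at hx
    rw [(hF_deriv (by linarith [hx.1] : (-1:ℝ) < x)).deriv]
    exact mul_nonneg (Real.exp_pos _).le (hP_nonneg hx.1 hx.2.le)

lemma hF_anti : AntitoneOn mrF (Set.Ici mrX) := by
  apply antitoneOn_of_deriv_nonpos (convex_Ici _)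
  · intro x hx
    have : (0:ℝ) < x := lt_of_lt_of_le hX_pos hx
    exact (hF_deriv (by linarith : (-1:ℝ) < x)).continuousAt.continuousWithinAt
  · intro x hx
    rw [interior_Ici] at hx
    have : (0:ℝ) < x := lt_trans hX_pos hx
    exact (hF_deriv (by linarith : (-1:ℝ) < x)).differentiableAt.differentiableWithinAt
  · intro x hx
    rw [interior_Ici] at hx
    have hx0 : (0:ℝ) < x := lt_trans hX_pos hx
    rw [(hF_deriv (by linarith : (-1:ℝ) < x)).deriv]
    exact mul_nonpos_of_nonneg_of_nonpos (Real.exp_pos _).le (hP_nonpos hx.le)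

lemma hF0 : mrF 0 = 0 := by
  have hI0 : mrI 0 = Real.sqrt (2 * π) / 2 := by
    have h := integral_gaussian_Ioi (1/2)
    have heq : ∀ t : ℝ, Real.exp (-(1/2) * t ^ 2) = mrf t := by
      intro t; unfold mrf; ring_nf
    unfold mrI
    rw [show π / (1/2) = 2 * π by ring] at h
    rw [← h]
    exact setIntegral_congr_fun measurableSet_Ioi fun t _ => (heq t).symm
  have h2 : Real.sqrt (2 * π) ^ 2 = 2 * π := Real.sq_sqrt (by positivity)
  have hsp : 0 < Real.sqrt (2 * π) := Real.sqrt_pos.mpr (by positivity)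
  unfold mrF mrg mrs
  rw [hI0]
  rw [show -(0:ℝ)^2/2 = 0 by norm_num, Real.exp_zero, one_mul,
    show ((π-2)^2*(0:ℝ)^2+2*π) = 2*π by ring, mul_zero, add_zero]
  rw [sub_eq_zero, div_eq_div_iff hsp.ne' two_ne_zero]
  nlinarith [h2]

lemma hI_tendsto : Tendsto mrI atTop (nhds 0) := by
  have h := MeasureTheory.intervalIntegral_tendsto_integral_Ioi (-1 : ℝ)
    hf_int.integrableOn tendsto_id
  have h2 : Tendsto (fun u => mrI (-1) - ∫ t in (-1:ℝ)..u, mrf t) atTop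
      (nhds (mrI (-1) - mrI (-1))) := tendsto_const_nhds.sub h
  rw [sub_self] at h2
  apply h2.congr'
  filter_upwards [eventually_ge_atTop (-1:ℝ)] with u hu
  exact (hI_repr hu).symm

lemma hEg_tendsto : Tendsto (fun x => Real.exp (-x ^ 2 / 2) * mrg x) atTop (nhds 0) := by
  have hub : Tendsto (fun x : ℝ => π / (2 * x)) atTop (nhds 0) :=
    Tendsto.div_atTop tendsto_const_nhds (tendsto_id.const_mul_atTop two_pos)
  apply tendsto_of_tendsto_of_tendsto_of_le_of_le' tendsto_const_nhds hub
  · filter_upwards [eventually_gt_atTop (0:ℝ)] with x hx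
    have := hs_pos x
    have := hd_pos (by linarith : (-1:ℝ) < x)
    unfold mrg
    positivity
  · filter_upwards [eventually_gt_atTop (0:ℝ)] with x hx
    have hs := hs_pos x
    have hE : Real.exp (-x ^ 2 / 2) ≤ 1 := by
      rw [show (1:ℝ) = Real.exp 0 from (Real.exp_zero).symm]
      apply Real.exp_le_exp.mpr
      nlinarith
    have hg : mrg x ≤ π / (2 * x) := by
      unfold mrg
      apply div_le_div_of_nonneg_left Real.pi_pos.le (by linarith)
      linarith
    have hgpos : 0 ≤ mrg x := by
      unfold mrg
      have := hd_pos (by linarith : (-1:ℝ) < x)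
      positivity
    calc Real.exp (-x ^ 2 / 2) * mrg x ≤ 1 * mrg x := by
          apply mul_le_mul_of_nonneg_right hE hgpos
      _ = mrg x := one_mul _
      _ ≤ π / (2 * x) := hg

lemma hF_tendsto : Tendsto mrF atTop (nhds 0) := by
  have := hEg_tendsto.sub hI_tendsto
  rw [sub_zero] at this
  exact this

lemma hF_nonneg {x : ℝ} (hx : 0 < x) : 0 ≤ mrF x := by
  rcases le_total x mrX with h | h
  · have := hF_mono (Set.mem_Icc.mpr ⟨le_refl 0, hX_pos.le⟩)
      (Set.mem_Icc.mpr ⟨hx.le, h⟩) hx.le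
    rw [hF0] at this
    exact this
  · apply le_of_tendsto hF_tendsto
    filter_upwards [eventually_ge_atTop x] with y hy
    exact hF_anti (Set.mem_Ici.mpr h) (Set.mem_Ici.mpr (le_trans h hy)) hy

theorem mills_ratio : ∀ x : ℝ, 0 < x →
    (∫ t in Set.Ioi x, Real.exp (-t ^ 2 / 2)) ≤
      Real.pi * Real.exp (-x ^ 2 / 2) /
        (Real.sqrt ((Real.pi - 2) ^ 2 * x ^ 2 + 2 * Real.pi) + 2 * x) := by
  intro x hx
  have hF := hF_nonneg hx
  unfold mrF mrI mrg mrs mrf at hF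
  have hrw : Real.pi * Real.exp (-x ^ 2 / 2) /
        (Real.sqrt ((Real.pi - 2) ^ 2 * x ^ 2 + 2 * Real.pi) + 2 * x)
      = Real.exp (-x ^ 2 / 2) *
        (π / (Real.sqrt ((π - 2) ^ 2 * x ^ 2 + 2 * π) + 2 * x)) := by
    ring
  rw [hrw]
  linarith
end

section
/- Let f(x) = \sum_{k=-m}^{m-1} \hat f(k) e^{2\pi i k x} be a trigonometric polynomial, N ≥ m, and let \phi : ℝ/ℤ → ℂ be continuous with \hat\phi ∈ \ell^1(ℤ) and \phi(0) = 1. Define the regularized sampling operator R_\phi f(x) = \sum_{j=0}^{2N-1} f(j/(2N)) s_N(x - j/(2N)) \phi(x - j/(2N)), with s_N(x) = (1/(2N))\sum_{k=-N}^{N-1} e^{2\pi i kx}. Then the k-th Fourier coefficient of f - R_\phi f equals: \hat f(k)\nu(k) if k ∈ B_m; -\hat f(k - 2lN)\mu(k) if k ∉ B_N and k - 2lN ∈ B_m for some nonzero integer l; and 0 otherwise. Here \mu(k) = \sum_{l ∈ k - B_N}\hat\phi(l) and \nu(k) = 1 - \mu(k). -/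
open Complex MeasureTheory intervalIntegral

lemma rsec_ortho (n : ℤ) :
    (∫ x in (0:ℝ)..1, Complex.exp (2 * Real.pi * Complex.I * (n : ℂ) * (x : ℂ))) =
      if n = 0 then 1 else 0 := by
  rcases eq_or_ne n 0 with rfl | hn
  · simp
  · rw [if_neg hn]
    have hc : (2 * (Real.pi:ℂ) * Complex.I * (n:ℂ)) ≠ 0 := by
      simp [Real.pi_ne_zero, Complex.I_ne_zero, hn, Complex.ofReal_ne_zero]
    rw [integral_exp_mul_complex hc]
    have h1 : (2 * (Real.pi:ℂ) * Complex.I * (n:ℂ)) * ((1:ℝ):ℂ) = (n:ℂ) * (2 * Real.pi * Complex.I) := by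
      push_cast; ring
    have h0 : (2 * (Real.pi:ℂ) * Complex.I * (n:ℂ)) * ((0:ℝ):ℂ) = 0 := by push_cast; ring
    rw [h1, h0, Complex.exp_int_mul_two_pi_mul_I, Complex.exp_zero, sub_self, zero_div]

lemma rsec_geom (N : ℕ) (hN : 0 < N) (d : ℤ) :
    ∑ j ∈ Finset.range (2 * N),
        Complex.exp (2 * Real.pi * Complex.I * (d : ℂ) * ((j:ℂ) / (2 * (N:ℂ)))) =
      if (2 * (N:ℤ)) ∣ d then (2 * (N:ℂ)) else 0 := by
  have hNc : (2 * (N:ℂ)) ≠ 0 := by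
    simp [Nat.cast_ne_zero, hN.ne']
  by_cases hd : (2 * (N:ℤ)) ∣ d
  · obtain ⟨t, ht⟩ := hd
    rw [if_pos ⟨t, ht⟩]
    have : ∀ j ∈ Finset.range (2 * N),
        Complex.exp (2 * Real.pi * Complex.I * (d : ℂ) * ((j:ℂ) / (2 * (N:ℂ)))) = 1 := by
      intro j _
      have harg : 2 * (Real.pi:ℂ) * Complex.I * (d : ℂ) * ((j:ℂ) / (2 * (N:ℂ)))
          = ((t * j : ℤ):ℂ) * (2 * Real.pi * Complex.I) := by
        subst ht; push_cast; field_simp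
        rw [show (N:ℂ) * (t:ℂ) * (j:ℂ) / (N:ℂ) = ((N:ℂ) * (N:ℂ)⁻¹) * ((t:ℂ) * (j:ℂ)) by ring,
          mul_inv_cancel₀ (Nat.cast_ne_zero.mpr hN.ne'), one_mul]
      rw [harg, Complex.exp_int_mul_two_pi_mul_I]
    rw [Finset.sum_congr rfl this, Finset.sum_const, Finset.card_range]
    push_cast; ring
  · rw [if_neg hd]
    set z : ℂ := 2 * Real.pi * Complex.I * (d : ℂ) / (2 * (N:ℂ)) with hz
    have hterm : ∀ j ∈ Finset.range (2 * N),
        Complex.exp (2 * Real.pi * Complex.I * (d : ℂ) * ((j:ℂ) / (2 * (N:ℂ)))) = (Complex.exp z) ^ j := by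
      intro j _
      rw [← Complex.exp_nat_mul]
      congr 1
      rw [hz]; ring
    rw [Finset.sum_congr rfl hterm]
    have hω : Complex.exp z ≠ 1 := by
      intro h
      obtain ⟨n, hn⟩ := Complex.exp_eq_one_iff.mp h
      rw [hz] at hn
      field_simp at hn
      have hpi : (2 * (Real.pi:ℂ) * Complex.I) ≠ 0 := by
        simp [Real.pi_ne_zero, Complex.I_ne_zero, Complex.ofReal_ne_zero]
      have h2 : (2 * (Real.pi:ℂ) * Complex.I) * (d:ℂ)
          = (2 * (Real.pi:ℂ) * Complex.I) * ((2 * (N:ℤ) * n : ℤ):ℂ) := by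
        have hN' : (N:ℂ) ≠ 0 := Nat.cast_ne_zero.mpr hN.ne'
        rw [div_eq_iff hN'] at hn
        push_cast; linear_combination (2 * (Real.pi:ℂ) * Complex.I) * hn
      have h3 := mul_left_cancel₀ hpi h2
      have : d = 2 * (N:ℤ) * n := by exact_mod_cast h3
      exact hd ⟨n, this⟩
    rw [geom_sum_eq hω]
    have hpow : Complex.exp z ^ (2 * N) = 1 := by
      rw [← Complex.exp_nat_mul]
      have : ((2 * N : ℕ):ℂ) * z = (d:ℂ) * (2 * Real.pi * Complex.I) := by
        rw [hz]; push_cast; field_simp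
        rw [show (N:ℂ) * (d:ℂ) / (N:ℂ) = ((N:ℂ) * (N:ℂ)⁻¹) * (d:ℂ) by ring,
          mul_inv_cancel₀ (Nat.cast_ne_zero.mpr hN.ne'), one_mul]
      rw [this, Complex.exp_int_mul_two_pi_mul_I]
    rw [hpow, sub_self, zero_div]

lemma rsec_main (m N : ℕ) (hN0 : 0 < N)
    (fhat : ℤ → ℂ) (f sN φ : ℝ → ℂ) (φhat : ℤ → ℂ)
    (hf : ∀ x : ℝ, f x = ∑ k ∈ Finset.Icc (-(m : ℤ)) ((m : ℤ) - 1),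
      fhat k * Complex.exp (2 * Real.pi * Complex.I * (k : ℂ) * (x : ℂ)))
    (hs : ∀ x : ℝ, sN x = (1 / (2 * (N : ℂ))) *
      ∑ k ∈ Finset.Icc (-(N : ℤ)) ((N : ℤ) - 1),
        Complex.exp (2 * Real.pi * Complex.I * (k : ℂ) * (x : ℂ)))
    (hφcont : Continuous φ) (hφper : ∀ x : ℝ, φ (x + 1) = φ x)
    (hφhat : ∀ l : ℤ, φhat l = ∫ x in (0 : ℝ)..1,
      φ x * Complex.exp (-(2 * Real.pi * Complex.I * (l : ℂ) * (x : ℂ))))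
    (μ : ℤ → ℂ)
    (hμ : ∀ k : ℤ, μ k = ∑ l ∈ Finset.Icc (k - N + 1) (k + N), φhat l)
    (R : ℝ → ℂ)
    (hR : ∀ x : ℝ, R x = ∑ j ∈ Finset.range (2 * N),
      f ((j : ℝ) / (2 * N)) * sN (x - (j : ℝ) / (2 * N)) * φ (x - (j : ℝ) / (2 * N)))
    (k : ℤ) :
    (∫ x in (0 : ℝ)..1, (f x - R x) *
        Complex.exp (-(2 * Real.pi * Complex.I * (k : ℂ) * (x : ℂ)))) =
      (if k ∈ Finset.Icc (-(m : ℤ)) ((m : ℤ) - 1) then fhat k else 0)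
        - μ k * ∑ k' ∈ Finset.Icc (-(m : ℤ)) ((m : ℤ) - 1),
            (if (2 * (N : ℤ)) ∣ (k' - k) then fhat k' else 0) := by
  have hNc : (2 * (N:ℂ)) ≠ 0 := by simp [Nat.cast_ne_zero, hN0.ne']
  -- continuity helpers
  have cE : ∀ n : ℤ, Continuous fun x : ℝ =>
      Complex.exp (2 * Real.pi * Complex.I * (n:ℂ) * (x:ℂ)) :=
    fun n => (Continuous.mul continuous_const Complex.continuous_ofReal).cexp
  have cEneg : ∀ n : ℤ, Continuous fun x : ℝ =>
      Complex.exp (-(2 * Real.pi * Complex.I * (n:ℂ) * (x:ℂ))) :=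
    fun n => ((Continuous.mul continuous_const Complex.continuous_ofReal).neg).cexp
  have cf : Continuous f := by
    rw [funext hf]
    exact continuous_finset_sum _ fun i _ => continuous_const.mul (cE i)
  have csN : Continuous sN := by
    rw [funext hs]
    exact continuous_const.mul (continuous_finset_sum _ fun i _ => cE i)
  -- split the integral
  have hintF : IntervalIntegrable (fun x : ℝ => f x *
      Complex.exp (-(2 * Real.pi * Complex.I * (k:ℂ) * (x:ℂ)))) volume 0 1 :=
    (cf.mul (cEneg k)).intervalIntegrable _ _
  have hintR : IntervalIntegrable (fun x : ℝ => R x *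
      Complex.exp (-(2 * Real.pi * Complex.I * (k:ℂ) * (x:ℂ)))) volume 0 1 := by
    have : Continuous R := by
      rw [funext hR]
      exact continuous_finset_sum _ fun j _ => (continuous_const.mul
        (csN.comp (continuous_id.sub continuous_const))).mul
        (hφcont.comp (continuous_id.sub continuous_const))
    exact (this.mul (cEneg k)).intervalIntegrable _ _
  have hsplit : (∫ x in (0:ℝ)..1, (f x - R x) *
      Complex.exp (-(2 * Real.pi * Complex.I * (k:ℂ) * (x:ℂ))))
      = (∫ x in (0:ℝ)..1, f x * Complex.exp (-(2 * Real.pi * Complex.I * (k:ℂ) * (x:ℂ))))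
        - ∫ x in (0:ℝ)..1, R x * Complex.exp (-(2 * Real.pi * Complex.I * (k:ℂ) * (x:ℂ))) := by
    rw [← intervalIntegral.integral_sub hintF hintR]
    simp only [sub_mul]
  rw [hsplit]
  -- part A : ∫ f * E
  have hA : (∫ x in (0:ℝ)..1, f x * Complex.exp (-(2 * Real.pi * Complex.I * (k:ℂ) * (x:ℂ))))
      = if k ∈ Finset.Icc (-(m : ℤ)) ((m : ℤ) - 1) then fhat k else 0 := by
    simp only [hf, Finset.sum_mul]
    rw [intervalIntegral.integral_finset_sum (f := fun i x => fhat i * Complex.exp (2 * Real.pi * Complex.I * (i:ℂ) * (x:ℂ))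
        * Complex.exp (-(2 * Real.pi * Complex.I * (k:ℂ) * (x:ℂ)))) (fun i _ =>
      ((continuous_const.mul (cE i)).mul (cEneg k)).intervalIntegrable _ _)]
    have hterm : ∀ k' ∈ Finset.Icc (-(m : ℤ)) ((m : ℤ) - 1),
        (∫ x in (0:ℝ)..1, fhat k' * Complex.exp (2 * Real.pi * Complex.I * (k':ℂ) * (x:ℂ))
          * Complex.exp (-(2 * Real.pi * Complex.I * (k:ℂ) * (x:ℂ))))
        = fhat k' * (if k' - k = 0 then 1 else 0) := by
      intro k' _
      have hfun : (fun x : ℝ => fhat k' * Complex.exp (2 * Real.pi * Complex.I * (k':ℂ) * (x:ℂ))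
            * Complex.exp (-(2 * Real.pi * Complex.I * (k:ℂ) * (x:ℂ))))
          = fun x : ℝ => fhat k' * Complex.exp (2 * Real.pi * Complex.I * ((k' - k : ℤ):ℂ) * (x:ℂ)) := by
        funext x
        rw [mul_assoc, ← Complex.exp_add]
        congr 2
        push_cast; ring
      rw [hfun, intervalIntegral.integral_const_mul, rsec_ortho]
    rw [Finset.sum_congr rfl hterm]
    simp only [sub_eq_zero, mul_ite, mul_one, mul_zero]
    rw [Finset.sum_ite_eq' (Finset.Icc (-(m : ℤ)) ((m : ℤ) - 1)) k fhat]
  rw [hA]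
  -- part B
  have hBj : ∀ j ∈ Finset.range (2*N),
      (∫ x in (0:ℝ)..1, f ((j:ℝ)/(2*N)) * sN (x - (j:ℝ)/(2*N)) * φ (x - (j:ℝ)/(2*N))
          * Complex.exp (-(2 * Real.pi * Complex.I * (k:ℂ) * (x:ℂ))))
      = (f ((j:ℝ)/(2*N)) *
          Complex.exp (-(2 * Real.pi * Complex.I * (k:ℂ) * (((j:ℝ)/(2*N) : ℝ):ℂ))))
        * ((1/(2*(N:ℂ))) * μ k) := by
    intro j _
    set a : ℝ := (j:ℝ)/(2*(N:ℝ)) with ha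
    have key2 : Complex.exp (-(2 * Real.pi * Complex.I * (k:ℂ) * (a:ℂ)))
        * Complex.exp (2 * Real.pi * Complex.I * (k:ℂ) * (a:ℂ)) = 1 := by
      rw [← Complex.exp_add]; simp
    have hpt : ∀ x : ℝ, f a * sN (x - a) * φ (x - a)
          * Complex.exp (-(2 * Real.pi * Complex.I * (k:ℂ) * (x:ℂ)))
        = (f a * Complex.exp (-(2 * Real.pi * Complex.I * (k:ℂ) * (a:ℂ))))
          * ((fun y : ℝ => sN y * φ y *
              Complex.exp (-(2 * Real.pi * Complex.I * (k:ℂ) * (y:ℂ)))) (x - a)) := by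
      intro x
      simp only
      have key : Complex.exp (-(2 * Real.pi * Complex.I * (k:ℂ) * ((x - a : ℝ):ℂ)))
          = Complex.exp (-(2 * Real.pi * Complex.I * (k:ℂ) * (x:ℂ)))
            * Complex.exp (2 * Real.pi * Complex.I * (k:ℂ) * (a:ℂ)) := by
        rw [← Complex.exp_add]; congr 1; push_cast; ring
      rw [key]
      linear_combination (-(f a * sN (x-a) * φ (x-a) *
        Complex.exp (-(2 * Real.pi * Complex.I * (k:ℂ) * (x:ℂ))))) * key2
    have hstep1 : (∫ x in (0:ℝ)..1, f a * sN (x - a) * φ (x - a)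
          * Complex.exp (-(2 * Real.pi * Complex.I * (k:ℂ) * (x:ℂ))))
        = (f a * Complex.exp (-(2 * Real.pi * Complex.I * (k:ℂ) * (a:ℂ))))
          * ∫ x in (0:ℝ)..1, (fun y : ℝ => sN y * φ y *
              Complex.exp (-(2 * Real.pi * Complex.I * (k:ℂ) * (y:ℂ)))) (x - a) := by
      rw [← intervalIntegral.integral_const_mul]
      exact intervalIntegral.integral_congr fun x _ => hpt x
    rw [hstep1, intervalIntegral.integral_comp_sub_right
      (fun y : ℝ => sN y * φ y * Complex.exp (-(2 * Real.pi * Complex.I * (k:ℂ) * (y:ℂ)))) a]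
    have hper : Function.Periodic (fun y : ℝ => sN y * φ y *
        Complex.exp (-(2 * Real.pi * Complex.I * (k:ℂ) * (y:ℂ)))) 1 := by
      intro y
      simp only
      have h1 : sN (y + 1) = sN y := by
        rw [hs, hs]
        congr 1
        apply Finset.sum_congr rfl
        intro n _
        rw [show (2 * (Real.pi:ℂ) * Complex.I * (n:ℂ) * ((y + 1 : ℝ):ℂ))
            = 2 * (Real.pi:ℂ) * Complex.I * (n:ℂ) * (y:ℂ) + (n:ℤ) * (2 * Real.pi * Complex.I)
            by push_cast; ring, Complex.exp_add, Complex.exp_int_mul_two_pi_mul_I, mul_one]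
      have h2 : Complex.exp (-(2 * Real.pi * Complex.I * (k:ℂ) * ((y + 1 : ℝ):ℂ)))
          = Complex.exp (-(2 * Real.pi * Complex.I * (k:ℂ) * (y:ℂ))) := by
        rw [show (-(2 * (Real.pi:ℂ) * Complex.I * (k:ℂ) * ((y + 1 : ℝ):ℂ)))
            = -(2 * (Real.pi:ℂ) * Complex.I * (k:ℂ) * (y:ℂ)) + ((-k : ℤ):ℂ) * (2 * Real.pi * Complex.I)
            by push_cast; ring, Complex.exp_add, Complex.exp_int_mul_two_pi_mul_I, mul_one]
      rw [h1, hφper, h2]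
    have hshift : (∫ x in (0:ℝ) - a..(1:ℝ) - a, sN x * φ x *
          Complex.exp (-(2 * Real.pi * Complex.I * (k:ℂ) * (x:ℂ))))
        = ∫ x in (0:ℝ)..1, sN x * φ x *
          Complex.exp (-(2 * Real.pi * Complex.I * (k:ℂ) * (x:ℂ))) := by
      have := hper.intervalIntegral_add_eq (0 - a) 0
      rw [show (0:ℝ) - a + 1 = 1 - a by ring, zero_add] at this
      exact this
    rw [hshift]
    -- inner integral equals (1/(2N)) * μ k
    have hinner : (∫ y in (0:ℝ)..1, sN y * φ y *
          Complex.exp (-(2 * Real.pi * Complex.I * (k:ℂ) * (y:ℂ))))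
        = (1/(2*(N:ℂ))) * μ k := by
      have hpt2 : ∀ y : ℝ, sN y * φ y * Complex.exp (-(2 * Real.pi * Complex.I * (k:ℂ) * (y:ℂ)))
          = ∑ n ∈ Finset.Icc (-(N:ℤ)) ((N:ℤ) - 1), (1/(2*(N:ℂ)))
              * (φ y * Complex.exp (-(2 * Real.pi * Complex.I * ((k - n : ℤ):ℂ) * (y:ℂ)))) := by
        intro y
        rw [hs y, Finset.mul_sum, Finset.sum_mul, Finset.sum_mul]
        apply Finset.sum_congr rfl
        intro n _
        have hexp : Complex.exp (2 * Real.pi * Complex.I * (n:ℂ) * (y:ℂ))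
            * Complex.exp (-(2 * Real.pi * Complex.I * (k:ℂ) * (y:ℂ)))
            = Complex.exp (-(2 * Real.pi * Complex.I * ((k - n : ℤ):ℂ) * (y:ℂ))) := by
          rw [← Complex.exp_add]; congr 1; push_cast; ring
        linear_combination ((1/(2*(N:ℂ))) * φ y) * hexp
      rw [intervalIntegral.integral_congr (g := fun y : ℝ =>
        ∑ n ∈ Finset.Icc (-(N:ℤ)) ((N:ℤ) - 1), (1/(2*(N:ℂ)))
          * (φ y * Complex.exp (-(2 * Real.pi * Complex.I * ((k - n : ℤ):ℂ) * (y:ℂ)))))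
        (fun y _ => hpt2 y)]
      rw [intervalIntegral.integral_finset_sum (f := fun n y => (1/(2*(N:ℂ)))
          * (φ y * Complex.exp (-(2 * Real.pi * Complex.I * ((k - n : ℤ):ℂ) * (y:ℂ))))) (fun n _ =>
        (continuous_const.mul (hφcont.mul (cEneg (k - n)))).intervalIntegrable _ _)]
      have : ∀ n ∈ Finset.Icc (-(N:ℤ)) ((N:ℤ) - 1),
          (∫ y in (0:ℝ)..1, (1/(2*(N:ℂ)))
            * (φ y * Complex.exp (-(2 * Real.pi * Complex.I * ((k - n : ℤ):ℂ) * (y:ℂ)))))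
          = (1/(2*(N:ℂ))) * φhat (k - n) := by
        intro n _
        rw [intervalIntegral.integral_const_mul, ← hφhat (k - n)]
      rw [Finset.sum_congr rfl this, ← Finset.mul_sum]
      congr 1
      rw [hμ k]
      apply Finset.sum_nbij' (i := fun n => k - n) (j := fun l => k - l)
      · intro a ha; simp only [Finset.mem_Icc] at *; omega
      · intro a ha; simp only [Finset.mem_Icc] at *; omega
      · intro a _; ring
      · intro a _; ring
      · intro a _; rfl
    rw [hinner]
  -- assemble part B and conclude
  have hB : (∫ x in (0:ℝ)..1, R x * Complex.exp (-(2 * Real.pi * Complex.I * (k:ℂ) * (x:ℂ))))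
      = ((1/(2*(N:ℂ))) * μ k) * ∑ j ∈ Finset.range (2*N),
          f ((j:ℝ)/(2*N)) *
            Complex.exp (-(2 * Real.pi * Complex.I * (k:ℂ) * (((j:ℝ)/(2*N) : ℝ):ℂ))) := by
    simp only [hR, Finset.sum_mul]
    have hint : ∀ j ∈ Finset.range (2*N), IntervalIntegrable
        (fun x : ℝ => f ((j:ℝ)/(2*N)) * sN (x - (j:ℝ)/(2*N)) * φ (x - (j:ℝ)/(2*N)) *
          Complex.exp (-(2 * Real.pi * Complex.I * (k:ℂ) * (x:ℂ)))) volume 0 1 := by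
      intro j _
      exact (((continuous_const.mul (csN.comp (continuous_id.sub continuous_const))).mul
        (hφcont.comp (continuous_id.sub continuous_const))).mul (cEneg k)).intervalIntegrable _ _
    rw [intervalIntegral.integral_finset_sum hint]
    rw [Finset.sum_congr rfl hBj, Finset.mul_sum]
    apply Finset.sum_congr rfl
    intro j _
    ring
  have hS : (∑ j ∈ Finset.range (2*N),
        f ((j:ℝ)/(2*N)) *
          Complex.exp (-(2 * Real.pi * Complex.I * (k:ℂ) * (((j:ℝ)/(2*N) : ℝ):ℂ))))
      = ∑ k' ∈ Finset.Icc (-(m:ℤ)) ((m:ℤ)-1),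
          fhat k' * (if (2*(N:ℤ)) ∣ (k'-k) then (2*(N:ℂ)) else 0) := by
    have h1 : ∀ j ∈ Finset.range (2*N),
        f ((j:ℝ)/(2*N)) *
            Complex.exp (-(2 * Real.pi * Complex.I * (k:ℂ) * (((j:ℝ)/(2*N) : ℝ):ℂ)))
        = ∑ k' ∈ Finset.Icc (-(m:ℤ)) ((m:ℤ)-1),
            fhat k' * Complex.exp (2 * Real.pi * Complex.I * ((k'-k : ℤ):ℂ) * ((j:ℂ)/(2*(N:ℂ)))) := by
      intro j _
      rw [hf, Finset.sum_mul]
      apply Finset.sum_congr rfl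
      intro k' _
      rw [mul_assoc, ← Complex.exp_add]
      congr 2
      push_cast
      ring
    rw [Finset.sum_congr rfl h1, Finset.sum_comm]
    apply Finset.sum_congr rfl
    intro k' _
    rw [← Finset.mul_sum, rsec_geom N hN0 (k'-k)]
  rw [hB, hS]
  congr 1
  rw [Finset.mul_sum, Finset.mul_sum]
  apply Finset.sum_congr rfl
  intro k' _
  split_ifs with h
  · field_simp
    rw [show (N:ℂ) * μ k * fhat k' / (N:ℂ) = ((N:ℂ) * (N:ℂ)⁻¹) * (μ k * fhat k') by ring,
      mul_inv_cancel₀ (Nat.cast_ne_zero.mpr hN0.ne'), one_mul]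
  · ring


theorem regularized_sampling_error_coefficients (m N : ℕ) (hm : 0 < m) (hN : m ≤ N)
    (fhat : ℤ → ℂ) (f sN φ : ℝ → ℂ) (φhat : ℤ → ℂ)
    (hf : ∀ x : ℝ, f x = ∑ k ∈ Finset.Icc (-(m : ℤ)) ((m : ℤ) - 1),
      fhat k * Complex.exp (2 * Real.pi * Complex.I * (k : ℂ) * (x : ℂ)))
    (hs : ∀ x : ℝ, sN x = (1 / (2 * (N : ℂ))) *
      ∑ k ∈ Finset.Icc (-(N : ℤ)) ((N : ℤ) - 1),
        Complex.exp (2 * Real.pi * Complex.I * (k : ℂ) * (x : ℂ)))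
    (hφcont : Continuous φ) (hφper : ∀ x : ℝ, φ (x + 1) = φ x) (hφ0 : φ 0 = 1)
    (hφhat : ∀ l : ℤ, φhat l = ∫ x in (0 : ℝ)..1,
      φ x * Complex.exp (-(2 * Real.pi * Complex.I * (l : ℂ) * (x : ℂ))))
    (hsum : Summable (fun l : ℤ => ‖φhat l‖))
    (μ ν : ℤ → ℂ)
    (hμ : ∀ k : ℤ, μ k = ∑ l ∈ Finset.Icc (k - N + 1) (k + N), φhat l)
    (hν : ∀ k : ℤ, ν k = 1 - μ k)
    (R : ℝ → ℂ)
    (hR : ∀ x : ℝ, R x = ∑ j ∈ Finset.range (2 * N),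
      f ((j : ℝ) / (2 * N)) * sN (x - (j : ℝ) / (2 * N)) * φ (x - (j : ℝ) / (2 * N))) :
    ∀ k : ℤ,
      (k ∈ Finset.Icc (-(m : ℤ)) ((m : ℤ) - 1) →
        (∫ x in (0 : ℝ)..1, (f x - R x) *
            Complex.exp (-(2 * Real.pi * Complex.I * (k : ℂ) * (x : ℂ)))) =
          fhat k * ν k) ∧
      (∀ l : ℤ, l ≠ 0 → k ∉ Finset.Icc (-(N : ℤ)) ((N : ℤ) - 1) →
        k - 2 * l * N ∈ Finset.Icc (-(m : ℤ)) ((m : ℤ) - 1) →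
        (∫ x in (0 : ℝ)..1, (f x - R x) *
            Complex.exp (-(2 * Real.pi * Complex.I * (k : ℂ) * (x : ℂ)))) =
          -(fhat (k - 2 * l * N) * μ k)) ∧
      (k ∉ Finset.Icc (-(m : ℤ)) ((m : ℤ) - 1) →
        (∀ l : ℤ, l ≠ 0 → k - 2 * l * N ∉ Finset.Icc (-(m : ℤ)) ((m : ℤ) - 1)) →
        (∫ x in (0 : ℝ)..1, (f x - R x) *
            Complex.exp (-(2 * Real.pi * Complex.I * (k : ℂ) * (x : ℂ)))) = 0) := by
  intro k
  have hN0 : 0 < N := lt_of_lt_of_le hm hN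
  have hmN : (m : ℤ) ≤ (N : ℤ) := by exact_mod_cast hN
  have hmain := rsec_main m N hN0 fhat f sN φ φhat hf hs hφcont hφper hφhat μ hμ R hR k
  refine ⟨?_, ?_, ?_⟩
  · -- k ∈ B_m
    intro hk
    have hT : (∑ k' ∈ Finset.Icc (-(m:ℤ)) ((m:ℤ)-1),
        (if (2 * (N:ℤ)) ∣ (k' - k) then fhat k' else 0)) = fhat k := by
      rw [Finset.sum_eq_single_of_mem k hk ?side, if_pos (by simp)]
      case side =>
        intro k' hk' hne
        rw [if_neg]
        intro hdvd
        have habs : |k' - k| < 2 * (N:ℤ) := by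
          simp only [Finset.mem_Icc] at hk hk'
          rw [abs_lt]
          omega
        exact hne (by have := Int.eq_zero_of_abs_lt_dvd hdvd habs; omega)
    rw [hmain, if_pos hk, hT, hν k]
    ring
  · -- aliasing case
    intro l hl hkN hkm
    have hknotm : k ∉ Finset.Icc (-(m:ℤ)) ((m:ℤ)-1) := by
      simp only [Finset.mem_Icc] at hkN ⊢
      omega
    have hT : (∑ k' ∈ Finset.Icc (-(m:ℤ)) ((m:ℤ)-1),
        (if (2 * (N:ℤ)) ∣ (k' - k) then fhat k' else 0)) = fhat (k - 2 * l * N) := by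
      rw [Finset.sum_eq_single_of_mem (k - 2 * l * N) hkm ?side,
        if_pos ⟨-l, by ring⟩]
      case side =>
        intro k' hk' hne
        rw [if_neg]
        intro hdvd
        have hdvd2 : (2 * (N:ℤ)) ∣ (k' - (k - 2 * l * N)) := by
          have : k' - (k - 2 * l * N) = (k' - k) + 2 * (N:ℤ) * l := by ring
          rw [this]
          exact dvd_add hdvd ⟨l, rfl⟩
        have habs : |k' - (k - 2 * l * N)| < 2 * (N:ℤ) := by
          simp only [Finset.mem_Icc] at hkm hk'
          rw [abs_lt]
          omega
        exact hne (by have := Int.eq_zero_of_abs_lt_dvd hdvd2 habs; omega)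
    rw [hmain, if_neg hknotm, hT]
    ring
  · -- zero case
    intro hkm hall
    have hT : (∑ k' ∈ Finset.Icc (-(m:ℤ)) ((m:ℤ)-1),
        (if (2 * (N:ℤ)) ∣ (k' - k) then fhat k' else 0)) = 0 := by
      apply Finset.sum_eq_zero
      intro k' hk'
      rw [if_neg]
      rintro ⟨t, ht⟩
      rcases eq_or_ne t 0 with rfl | htne
      · have : k' = k := by omega
        exact hkm (this ▸ hk')
      · have heq : k - 2 * (-t) * (N:ℤ) = k' := by linear_combination -ht
        exact hall (-t) (neg_ne_zero.mpr htne) (heq ▸ hk')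
    rw [hmain, if_neg hkm, hT]
    ring
end
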